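/- With E, Aₙ, Bₙ, C₀, D₀, Cₙ, Dₙ as above, let 𝐚₀, 𝐚₁, 𝐛₀, 𝐛₁ be the ideals of Sub E generated respectively by {Aₙ}, {Bₙ}, {Cₙ}, {Dₙ}. Then there do not exist subspaces X₀ ∈ 𝐚₀, X₁ ∈ 𝐚₁, Y₀ ∈ 𝐛₀, Y₁ ∈ 𝐛₁ with X₀ + X₁ = Y₀ ∩ Y₁, C₀ ⊆ Y₀, and D₀ ⊆ Y₁. (Hence D₄ is not ideal-projective with respect to relatively complemented modular lattices.) -/

import Mathlib

/-- The vector space over `k` with basis `{aₙ} ∪ {bₙ}` (`n < ω`). -/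
abbrev VecE (k : Type*) [Field k] := (ℕ ⊕ ℕ) →₀ k

variable (k : Type*) [Field k]

/-- The basis vector `aₙ`. -/
noncomputable def aV (n : ℕ) : VecE k := Finsupp.single (Sum.inl n) 1

/-- The basis vector `bₙ`. -/
noncomputable def bV (n : ℕ) : VecE k := Finsupp.single (Sum.inr n) 1

/-- `Aₙ = span(a₀, …, aₙ)`. -/
noncomputable def Asub (n : ℕ) : Submodule k (VecE k) := Submodule.span k {v | ∃ i ≤ n, v = aV k i}

/-- `Bₙ = span(b₀, …, bₙ)`. -/
noncomputable def Bsub (n : ℕ) : Submodule k (VecE k) := Submodule.span k {v | ∃ i ≤ n, v = bV k i}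

/-- `C₀ = span(a₀+b₀, a₁+b₁+a₀, a₂+b₂+a₁, …)`. -/
noncomputable def Czero : Submodule k (VecE k) :=
  Submodule.span k ({aV k 0 + bV k 0} ∪ {v | ∃ i, v = aV k (i+1) + bV k (i+1) + aV k i})

/-- `D₀ = span(a₀+b₀, a₁+b₁, a₂+b₂, …)`. -/
noncomputable def Dzero : Submodule k (VecE k) := Submodule.span k {v | ∃ i, v = aV k i + bV k i}

/-- `C₀` and `C₍n+1₎ = C₀ + Aₙ + Bₙ`. -/
noncomputable def Csub : ℕ → Submodule k (VecE k)
  | 0 => Czero k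
  | n + 1 => Czero k ⊔ Asub k n ⊔ Bsub k n

/-- `D₀` and `D₍n+1₎ = D₀ + Aₙ + Bₙ`. -/
noncomputable def Dsub : ℕ → Submodule k (VecE k)
  | 0 => Dzero k
  | n + 1 => Dzero k ⊔ Asub k n ⊔ Bsub k n

lemma Asub_coord {m : ℕ} {v : VecE k} (hv : v ∈ Asub k m) (s : ℕ ⊕ ℕ)
    (hs : ∀ i ≤ m, s ≠ Sum.inl i) : v s = 0 := by
  have hle : Asub k m ≤ LinearMap.ker (Finsupp.lapply (M := k) (R := k) s) := by
    rw [Asub, Submodule.span_le]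
    rintro _ ⟨i, hi, rfl⟩
    simp only [SetLike.mem_coe, LinearMap.mem_ker, Finsupp.lapply_apply, aV,
      Finsupp.single_apply, ite_eq_right_iff]
    intro h
    exact absurd h.symm (hs i hi)
  simpa using hle hv

lemma Bsub_coord {m : ℕ} {v : VecE k} (hv : v ∈ Bsub k m) (s : ℕ ⊕ ℕ)
    (hs : ∀ i ≤ m, s ≠ Sum.inr i) : v s = 0 := by
  have hle : Bsub k m ≤ LinearMap.ker (Finsupp.lapply (M := k) (R := k) s) := by
    rw [Bsub, Submodule.span_le]
    rintro _ ⟨i, hi, rfl⟩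
    simp only [SetLike.mem_coe, LinearMap.mem_ker, Finsupp.lapply_apply, bV,
      Finsupp.single_apply, ite_eq_right_iff]
    intro h
    exact absurd h.symm (hs i hi)
  simpa using hle hv

lemma decomp {X₀ X₁ : Submodule k (VecE k)} {m₀ m₁ : ℕ}
    (h₀ : X₀ ≤ Asub k m₀) (h₁ : X₁ ≤ Bsub k m₁) {n : ℕ}
    (h : aV k n + bV k n ∈ X₀ ⊔ X₁) : aV k n ∈ X₀ := by
  rw [Submodule.mem_sup] at h
  obtain ⟨x, hx, y, hy, hxy⟩ := h
  have hx' : x = aV k n := by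
    ext s
    have happ : x s + y s = aV k n s + bV k n s := by
      rw [← Finsupp.add_apply, ← Finsupp.add_apply, hxy]
    cases s with
    | inl j =>
      have hy0 : y (Sum.inl j) = 0 := Bsub_coord k (h₁ hy) _ (by simp)
      have hb0 : bV k n (Sum.inl j) = 0 := by simp [bV, Finsupp.single_apply]
      rw [hy0, hb0] at happ; simpa using happ
    | inr j =>
      have hx0 : x (Sum.inr j) = 0 := Asub_coord k (h₀ hx) _ (by simp)
      have ha0 : aV k n (Sum.inr j) = 0 := by simp [aV, Finsupp.single_apply]
      rw [hx0, ha0]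
  rwa [hx'] at hx


/-- With `𝐚₀, 𝐚₁, 𝐛₀, 𝐛₁` the ideals of `Sub E` generated by the chains
`{Aₙ}`, `{Bₙ}`, `{Cₙ}`, `{Dₙ}` respectively, there are no subspaces
`X₀ ∈ 𝐚₀`, `X₁ ∈ 𝐚₁`, `Y₀ ∈ 𝐛₀`, `Y₁ ∈ 𝐛₁` with `X₀ + X₁ = Y₀ ∩ Y₁`,
`C₀ ⊆ Y₀` and `D₀ ⊆ Y₁`. (Hence `D₄` is not ideal-projective with respect to
relatively complemented modular lattices.) -/
theorem no_ideal_projective_witness :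
    ¬ ∃ X₀ X₁ Y₀ Y₁ : Submodule k (VecE k),
        (∃ m, X₀ ≤ Asub k m) ∧ (∃ m, X₁ ≤ Bsub k m) ∧
        (∃ m, Y₀ ≤ Csub k m) ∧ (∃ m, Y₁ ≤ Dsub k m) ∧
        X₀ ⊔ X₁ = Y₀ ⊓ Y₁ ∧ Czero k ≤ Y₀ ∧ Dzero k ≤ Y₁ := by
  rintro ⟨X₀, X₁, Y₀, Y₁, ⟨m₀, hX₀⟩, ⟨m₁, hX₁⟩, _, _, heq, hC, hD⟩
  have hXY₀ : X₀ ≤ Y₀ := le_trans le_sup_left (heq ▸ inf_le_left)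
  have key : ∀ n, aV k n ∈ X₀ := by
    intro n
    induction n with
    | zero =>
      have hd : aV k 0 + bV k 0 ∈ X₀ ⊔ X₁ := by
        rw [heq]
        exact Submodule.mem_inf.2
          ⟨hC (Submodule.subset_span (Set.mem_union_left _ rfl)),
           hD (Submodule.subset_span ⟨0, rfl⟩)⟩
      exact decomp k hX₀ hX₁ hd
    | succ n ih =>
      have ha : aV k n ∈ Y₀ := hXY₀ ih
      have hc : aV k (n+1) + bV k (n+1) + aV k n ∈ Y₀ :=
        hC (Submodule.subset_span (Set.mem_union_right _ ⟨n, rfl⟩))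
      have hd0 : aV k (n+1) + bV k (n+1) ∈ Y₀ := by
        have := Y₀.sub_mem hc ha
        simpa using this
      have hd1 : aV k (n+1) + bV k (n+1) ∈ Y₁ := hD (Submodule.subset_span ⟨n+1, rfl⟩)
      have hmem : aV k (n+1) + bV k (n+1) ∈ X₀ ⊔ X₁ :=
        heq ▸ Submodule.mem_inf.2 ⟨hd0, hd1⟩
      exact decomp k hX₀ hX₁ hmem
  have hcoord := Asub_coord k (hX₀ (key (m₀+1))) (Sum.inl (m₀+1))
    (by intro i hi h; injection h with h'; omega)
  simp [aV, Finsupp.single_apply] at hcoord
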